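/- One-step contraction of SGD (key step in the proof of Theorem 3): let f : ℝ^d → ℝ be differentiable and μ-strongly convex with minimizer x*, let (Ω, P) be a probability space and g : Ω → ℝ^d a square-integrable random vector with ∫ g dP = ∇f(x) and ∫ ‖g‖² dP ≤ 4𝓛·(f(x) − f(x*)) + 2σ, where 𝓛 > 0 and σ ≥ 0. If 0 < γ ≤ 1/(2𝓛), then ∫ ‖x − γ·g(ω) − x*‖² dP(ω) ≤ (1 − γμ)·‖x − x*‖² + 2γ²σ. -/

import Mathlib

open MeasureTheory RealInnerProductSpace

/-- One-step contraction of SGD (key step in the proof of Theorem 3). -/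
theorem stmt9 {d : ℕ} {Ω : Type*} [MeasurableSpace Ω]
    (P : Measure Ω) [IsProbabilityMeasure P]
    (f : EuclideanSpace ℝ (Fin d) → ℝ)
    (gf : EuclideanSpace ℝ (Fin d) → EuclideanSpace ℝ (Fin d))
    (hgrad : ∀ z, HasGradientAt f (gf z) z)
    (μ : ℝ) (hμ : 0 < μ)
    (hsc : ∀ z w, f w ≥ f z + ⟪gf z, w - z⟫ + μ / 2 * ‖w - z‖ ^ 2)
    (xstar : EuclideanSpace ℝ (Fin d)) (hmin : ∀ z, f xstar ≤ f z)
    (x : EuclideanSpace ℝ (Fin d))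
    (g : Ω → EuclideanSpace ℝ (Fin d))
    (hgL2 : MemLp g 2 P)
    (hmean : ∫ ω, g ω ∂P = gf x)
    (𝓛 σ : ℝ) (h𝓛 : 0 < 𝓛) (hσ : 0 ≤ σ)
    (hsecond : ∫ ω, ‖g ω‖ ^ 2 ∂P ≤ 4 * 𝓛 * (f x - f xstar) + 2 * σ)
    (γ : ℝ) (hγ0 : 0 < γ) (hγ : γ ≤ 1 / (2 * 𝓛)) :
    ∫ ω, ‖x - γ • g ω - xstar‖ ^ 2 ∂P ≤ (1 - γ * μ) * ‖x - xstar‖ ^ 2 + 2 * γ ^ 2 * σ := by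
  set v := x - xstar with hv
  have hgint : Integrable g P := hgL2.integrable one_le_two
  have hsqint : Integrable (fun ω => ‖g ω‖ ^ 2) P := hgL2.norm.integrable_sq
  have hinnint : Integrable (fun ω => ⟪v, g ω⟫) P := hgint.const_inner v
  -- pointwise identity
  have hpt : ∀ ω, ‖x - γ • g ω - xstar‖ ^ 2
      = ‖v‖ ^ 2 - 2 * γ * ⟪v, g ω⟫ + γ ^ 2 * ‖g ω‖ ^ 2 := by
    intro ω
    have : x - γ • g ω - xstar = v - γ • g ω := by rw [hv]; abel
    rw [this, @norm_sub_sq_real (EuclideanSpace ℝ (Fin d)), real_inner_smul_right,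
      norm_smul, mul_pow]
    simp [abs_of_pos hγ0]
    ring
  have hInt : ∫ ω, ‖x - γ • g ω - xstar‖ ^ 2 ∂P
      = ‖v‖ ^ 2 - 2 * γ * ⟪v, gf x⟫ + γ ^ 2 * ∫ ω, ‖g ω‖ ^ 2 ∂P := by
    simp_rw [hpt]
    rw [integral_add (by exact (integrable_const _).sub (hinnint.const_mul _))
        (hsqint.const_mul _), integral_sub (integrable_const _) (hinnint.const_mul _),
      integral_const, integral_const_mul, integral_const_mul, integral_inner hgint, hmean]
    simp
  rw [hInt]
  have hΔ : 0 ≤ f x - f xstar := by linarith [hmin x]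
  have hkey : ⟪v, gf x⟫ ≥ f x - f xstar + μ / 2 * ‖v‖ ^ 2 := by
    have h := hsc x xstar
    have h1 : xstar - x = -(x - xstar) := by abel
    rw [h1, inner_neg_right, real_inner_comm] at h
    rw [norm_neg] at h
    linarith
  have hS : ∫ ω, ‖g ω‖ ^ 2 ∂P ≤ 4 * 𝓛 * (f x - f xstar) + 2 * σ := hsecond
  have hγ𝓛 : γ * (2 * 𝓛) ≤ 1 :=
    (le_div_iff₀ (by positivity : (0:ℝ) < 2 * 𝓛)).mp hγ
  nlinarith [sq_nonneg γ, mul_nonneg hγ0.le hΔ, sq_nonneg ‖v‖,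
    mul_le_mul_of_nonneg_left hS (sq_nonneg γ)]
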